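/- arXiv:0802.4008 — 3 statements merged into one kernel-verified Lean document; each statement's English description precedes it below -/
import Mathlib

section
/- Let $\ell_1, \dots, \ell_5$ be a pentagram of unit vectors in $\mathbb{R}^3$ (consecutive orthogonal, indices mod 5) with no two vectors parallel. Then the largest eigenvalue $\lambda_1$ of $A = \sum_i |\ell_i\rangle\langle\ell_i|$ satisfies $\lambda_1 > 2$. -/
/-- 3D cross product. -/
def crossR3 (u v : Fin 3 → ℝ) : Fin 3 → ℝ :=
  ![u 1 * v 2 - u 2 * v 1, u 2 * v 0 - u 0 * v 2, u 0 * v 1 - u 1 * v 0]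

lemma scalar_full0 (u0 u1 u2 v0 v1 v2 z0 z1 z2 : ℝ)
    (hu : u0^2 + u1^2 + u2^2 = 1) (hv : v0^2 + v1^2 + v2^2 = 1)
    (huv : u0*v0 + u1*v1 + u2*v2 = 0) :
    z0 = (z0*u0 + z1*u1 + z2*u2) * u0 + (z0*v0 + z1*v1 + z2*v2) * v0
      + (z0*(u1*v2 - u2*v1) + z1*(u2*v0 - u0*v2) + z2*(u0*v1 - u1*v0)) * (u1*v2 - u2*v1) := by
  linear_combination
    - ((v0^2+v1^2+v2^2)*z0 - (z0*v0+z1*v1+z2*v2)*v0) * hu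
    - (z0 - (z0*u0+z1*u1+z2*u2)*u0) * hv
    - ((z0*v0+z1*v1+z2*v2)*u0 + (z0*u0+z1*u1+z2*u2)*v0 - (u0*v0+u1*v1+u2*v2)*z0) * huv

/-- Full orthonormal expansion, pointwise. -/
lemma full_decomp (u v z : Fin 3 → ℝ)
    (hu : u 0^2 + u 1^2 + u 2^2 = 1) (hv : v 0^2 + v 1^2 + v 2^2 = 1)
    (huv : u 0*v 0 + u 1*v 1 + u 2*v 2 = 0) (jj : Fin 3) :
    z jj = (z 0*u 0 + z 1*u 1 + z 2*u 2) * u jj + (z 0*v 0 + z 1*v 1 + z 2*v 2) * v jj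
      + (z 0*crossR3 u v 0 + z 1*crossR3 u v 1 + z 2*crossR3 u v 2) * crossR3 u v jj := by
  fin_cases jj <;> simp [crossR3]
  · linear_combination scalar_full0 (u 0) (u 1) (u 2) (v 0) (v 1) (v 2) (z 0) (z 1) (z 2) hu hv huv
  · linear_combination scalar_full0 (u 1) (u 2) (u 0) (v 1) (v 2) (v 0) (z 1) (z 2) (z 0)
      (by linarith) (by linarith) (by linarith)
  · linear_combination scalar_full0 (u 2) (u 0) (u 1) (v 2) (v 0) (v 1) (z 2) (z 0) (z 1)
      (by linarith) (by linarith) (by linarith)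

/-- cross of orthonormal pair is unit. -/
lemma cross_norm (u v : Fin 3 → ℝ)
    (hu : u 0^2 + u 1^2 + u 2^2 = 1) (hv : v 0^2 + v 1^2 + v 2^2 = 1)
    (huv : u 0*v 0 + u 1*v 1 + u 2*v 2 = 0) :
    crossR3 u v 0 ^2 + crossR3 u v 1 ^2 + crossR3 u v 2 ^2 = 1 := by
  simp only [crossR3, Matrix.cons_val_zero, Matrix.cons_val_one, Matrix.head_cons,
    Matrix.cons_val_two, Matrix.tail_cons]
  linear_combination (v 0^2+v 1^2+v 2^2)*hu + hv - (u 0*v 0+u 1*v 1+u 2*v 2)*huv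

/-- Expansion in the plane of two orthonormal vectors. -/
lemma expand_in_plane (u v z : Fin 3 → ℝ)
    (hu : u 0^2 + u 1^2 + u 2^2 = 1) (hv : v 0^2 + v 1^2 + v 2^2 = 1)
    (huv : u 0*v 0 + u 1*v 1 + u 2*v 2 = 0)
    (hz : z 0*crossR3 u v 0 + z 1*crossR3 u v 1 + z 2*crossR3 u v 2 = 0) (jj : Fin 3) :
    z jj = (z 0*u 0 + z 1*u 1 + z 2*u 2) * u jj + (z 0*v 0 + z 1*v 1 + z 2*v 2) * v jj := by
  have h := full_decomp u v z hu hv huv jj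
  rw [hz, zero_mul, add_zero] at h
  exact h

/-- Two vectors orthogonal to an orthonormal pair, one of unit norm, are parallel. -/
lemma parallel_normals (u v z w : Fin 3 → ℝ)
    (hu : u 0^2 + u 1^2 + u 2^2 = 1) (hv : v 0^2 + v 1^2 + v 2^2 = 1)
    (huv : u 0*v 0 + u 1*v 1 + u 2*v 2 = 0)
    (hzu : z 0*u 0 + z 1*u 1 + z 2*u 2 = 0) (hzv : z 0*v 0 + z 1*v 1 + z 2*v 2 = 0)
    (hwu : w 0*u 0 + w 1*u 1 + w 2*u 2 = 0) (hwv : w 0*v 0 + w 1*v 1 + w 2*v 2 = 0)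
    (hw : w 0^2 + w 1^2 + w 2^2 = 1) :
    ∃ cc : ℝ, ∀ jj, z jj = cc * w jj := by
  have hzd : ∀ jj, z jj
      = (z 0*crossR3 u v 0 + z 1*crossR3 u v 1 + z 2*crossR3 u v 2) * crossR3 u v jj := by
    intro jj
    have h := full_decomp u v z hu hv huv jj
    rw [hzu, hzv, zero_mul, zero_mul, zero_add, zero_add] at h
    exact h
  have hwd : ∀ jj, w jj
      = (w 0*crossR3 u v 0 + w 1*crossR3 u v 1 + w 2*crossR3 u v 2) * crossR3 u v jj := by
    intro jj
    have h := full_decomp u v w hu hv huv jj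
    rw [hwu, hwv, zero_mul, zero_mul, zero_add, zero_add] at h
    exact h
  have hwn2 : (w 0*crossR3 u v 0 + w 1*crossR3 u v 1 + w 2*crossR3 u v 2)^2 = 1 := by
    linear_combination hw - w 0*hwd 0 - w 1*hwd 1 - w 2*hwd 2
  refine ⟨(z 0*crossR3 u v 0 + z 1*crossR3 u v 1 + z 2*crossR3 u v 2)
    * (w 0*crossR3 u v 0 + w 1*crossR3 u v 1 + w 2*crossR3 u v 2), fun jj => ?_⟩
  linear_combination hzd jj
    - (z 0*crossR3 u v 0 + z 1*crossR3 u v 1 + z 2*crossR3 u v 2)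
      * (w 0*crossR3 u v 0 + w 1*crossR3 u v 1 + w 2*crossR3 u v 2) * hwd jj
    - (z 0*crossR3 u v 0 + z 1*crossR3 u v 1 + z 2*crossR3 u v 2) * crossR3 u v jj * hwn2

/-- if w is a unit normal to the plane of u,v and z ⊥ w then z lies in the plane. -/
lemma perp_plane (u v z w : Fin 3 → ℝ)
    (hu : u 0^2 + u 1^2 + u 2^2 = 1) (hv : v 0^2 + v 1^2 + v 2^2 = 1)
    (huv : u 0*v 0 + u 1*v 1 + u 2*v 2 = 0)
    (hwu : w 0*u 0 + w 1*u 1 + w 2*u 2 = 0) (hwv : w 0*v 0 + w 1*v 1 + w 2*v 2 = 0)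
    (hw : w 0^2 + w 1^2 + w 2^2 = 1)
    (hzw : z 0*w 0 + z 1*w 1 + z 2*w 2 = 0) :
    z 0*crossR3 u v 0 + z 1*crossR3 u v 1 + z 2*crossR3 u v 2 = 0 := by
  have hwd : ∀ jj, w jj
      = (w 0*crossR3 u v 0 + w 1*crossR3 u v 1 + w 2*crossR3 u v 2) * crossR3 u v jj := by
    intro jj
    have h := full_decomp u v w hu hv huv jj
    rw [hwu, hwv, zero_mul, zero_mul, zero_add, zero_add] at h
    exact h
  set wn := w 0*crossR3 u v 0 + w 1*crossR3 u v 1 + w 2*crossR3 u v 2 with hwndef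
  have hwn2 : wn^2 = 1 := by
    linear_combination hw - w 0*hwd 0 - w 1*hwd 1 - w 2*hwd 2
  set zn := z 0*crossR3 u v 0 + z 1*crossR3 u v 1 + z 2*crossR3 u v 2 with hzndef
  linear_combination (-zn)*hwn2 - wn*z 0*hwd 0 - wn*z 1*hwd 1 - wn*z 2*hwd 2 + wn*hzw

/-- cross = 0 for unit u implies parallel. -/
lemma parallel_of_cross_eq_zero (u v : Fin 3 → ℝ)
    (hu : u 0^2 + u 1^2 + u 2^2 = 1)
    (h : ∀ jj, crossR3 u v jj = 0) :
    ∀ jj, v jj = (u 0*v 0 + u 1*v 1 + u 2*v 2) * u jj := by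
  have h0 := h 0; have h1 := h 1; have h2 := h 2
  simp only [crossR3, Matrix.cons_val_zero, Matrix.cons_val_one, Matrix.head_cons,
    Matrix.cons_val_two, Matrix.tail_cons] at h0 h1 h2
  intro jj
  fin_cases jj <;> simp only [Fin.zero_eta, Fin.mk_one, Fin.reduceFinMk]
  · linear_combination (-(v 0))*hu + u 2*h1 - u 1*h2
  · linear_combination (-(v 1))*hu + u 0*h2 - u 2*h0
  · linear_combination (-(v 2))*hu + u 1*h0 - u 0*h1

/-- Existence of a common vector of two planes, with decompositions. -/
lemma exists_common (u v u' v' : Fin 3 → ℝ)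
    (hu : u 0^2 + u 1^2 + u 2^2 = 1) (hv : v 0^2 + v 1^2 + v 2^2 = 1)
    (huv : u 0*v 0 + u 1*v 1 + u 2*v 2 = 0)
    (hu' : u' 0^2 + u' 1^2 + u' 2^2 = 1) (hv' : v' 0^2 + v' 1^2 + v' 2^2 = 1)
    (hu'v' : u' 0*v' 0 + u' 1*v' 1 + u' 2*v' 2 = 0)
    (hvu' : v 0*u' 0 + v 1*u' 1 + v 2*u' 2 = 0) :
    ∃ x : Fin 3 → ℝ,
      (∀ jj, x jj = (x 0*u 0 + x 1*u 1 + x 2*u 2) * u jj + (x 0*v 0 + x 1*v 1 + x 2*v 2) * v jj)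
      ∧ (∀ jj, x jj = (x 0*u' 0 + x 1*u' 1 + x 2*u' 2) * u' jj
            + (x 0*v' 0 + x 1*v' 1 + x 2*v' 2) * v' jj)
      ∧ ((∀ jj, x jj = 0) → ∃ cc : ℝ, ∀ jj, u' jj = cc * u jj) := by
  set n1 := crossR3 u v with hn1def
  set n2 := crossR3 u' v' with hn2def
  refine ⟨crossR3 n1 n2, ?_, ?_, ?_⟩
  · intro jj
    refine expand_in_plane u v _ hu hv huv ?_ jj
    rw [hn1def, hn2def]
    simp [crossR3]
    ring
  · intro jj
    refine expand_in_plane u' v' _ hu' hv' hu'v' ?_ jj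
    rw [hn1def, hn2def]
    simp [crossR3]
    ring
  · intro h
    have hn1n := cross_norm u v hu hv huv
    have hn2n := cross_norm u' v' hu' hv' hu'v'
    rw [← hn1def] at hn1n
    rw [← hn2def] at hn2n
    have hpar := parallel_of_cross_eq_zero n1 n2 hn1n h
    set q := n1 0*n2 0 + n1 1*n2 1 + n1 2*n2 2 with hqdef
    by_cases hq : q = 0
    · exfalso
      rw [hpar 0, hpar 1, hpar 2, hq] at hn2n
      norm_num at hn2n
    · have hu'n2 : u' 0*n2 0 + u' 1*n2 1 + u' 2*n2 2 = 0 := by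
        rw [hn2def]; simp [crossR3]; ring
      have hqx : q * (u' 0*n1 0 + u' 1*n1 1 + u' 2*n1 2) = 0 := by
        linear_combination hu'n2 - u' 0*hpar 0 - u' 1*hpar 1 - u' 2*hpar 2
      have hu'n1 : u' 0*n1 0 + u' 1*n1 1 + u' 2*n1 2 = 0 :=
        (mul_eq_zero.mp hqx).resolve_left hq
      have hdec := fun jj => expand_in_plane u v u' hu hv huv (by
        rw [← hn1def]; linear_combination hu'n1) jj
      have hzero : u' 0*v 0 + u' 1*v 1 + u' 2*v 2 = 0 := by linear_combination hvu'
      exact ⟨u' 0*u 0 + u' 1*u 1 + u' 2*u 2, fun jj => by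
        linear_combination hdec jj + v jj * hzero⟩

open Matrix in
lemma quad_le_of_eigen (A : Matrix (Fin 3) (Fin 3) ℝ) (hA : A.IsHermitian)
    (h2 : ∀ i, hA.eigenvalues i ≤ 2) (x : Fin 3 → ℝ) :
    x ⬝ᵥ A.mulVec x ≤ 2 * (x ⬝ᵥ x) := by
  set B := hA.eigenvectorBasis with hB
  have hinner : ∀ u v : EuclideanSpace ℝ (Fin 3),
      (inner (𝕜 := ℝ) (E := EuclideanSpace ℝ (Fin 3)) u v) = u.ofLp ⬝ᵥ v.ofLp := by
    intro u v
    simp [PiLp.inner_apply, dotProduct, RCLike.inner_apply, mul_comm]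
  have hsum : ∀ u v : Fin 3 → ℝ,
      u ⬝ᵥ v = ∑ i, (u ⬝ᵥ (B i : Fin 3 → ℝ)) * ((B i : Fin 3 → ℝ) ⬝ᵥ v) := by
    intro u v
    have := B.sum_inner_mul_inner (WithLp.toLp 2 u) (WithLp.toLp 2 v)
    simp only [hinner, WithLp.ofLp_toLp] at this
    exact this.symm
  have hsymm : Aᵀ = A := hA
  have hBA : ∀ i, (B i : Fin 3 → ℝ) ⬝ᵥ A.mulVec x
      = hA.eigenvalues i * ((B i : Fin 3 → ℝ) ⬝ᵥ x) := by
    intro i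
    rw [Matrix.dotProduct_mulVec, ← Matrix.mulVec_transpose, hsymm,
      show (A *ᵥ (B i : Fin 3 → ℝ)) = hA.eigenvalues i • (B i : Fin 3 → ℝ) from
        hA.mulVec_eigenvectorBasis i]
    simp [smul_dotProduct, hB]
  rw [hsum x (A.mulVec x), hsum x x]
  rw [Finset.mul_sum]
  apply Finset.sum_le_sum
  intro i _
  rw [hBA]
  have hcomm : (B i : Fin 3 → ℝ) ⬝ᵥ x = x ⬝ᵥ (B i : Fin 3 → ℝ) := dotProduct_comm _ _
  rw [hcomm]
  nlinarith [sq_nonneg (x ⬝ᵥ (B i : Fin 3 → ℝ)), h2 i]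

/-- For a pentagram with no two parallel vectors, the operator
`A = ∑ᵢ |ℓᵢ⟩⟨ℓᵢ|` has an eigenvalue strictly greater than 2 (so its largest
eigenvalue exceeds 2). -/
theorem pentagram_top_eigenvalue_gt_two (ℓ : Fin 5 → Fin 3 → ℝ)
    (hunit : ∀ i, ∑ j, ℓ i j ^ 2 = 1)
    (horth : ∀ i : Fin 5, ∑ j, ℓ i j * ℓ (i + 1) j = 0)
    (hnpar : ∀ i j : Fin 5, i ≠ j → ∀ c : ℝ, ℓ i ≠ c • ℓ j) :
    ∃ (μ : ℝ) (v : Fin 3 → ℝ), 2 < μ ∧ v ≠ 0 ∧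
      (∑ i, Matrix.of (fun a b => ℓ i a * ℓ i b)).mulVec v = μ • v := by
  have hU : ∀ i, ℓ i 0^2 + ℓ i 1^2 + ℓ i 2^2 = 1 := fun i => by
    simpa [Fin.sum_univ_three] using hunit i
  have hO : ∀ i : Fin 5, ℓ i 0 * ℓ (i+1) 0 + ℓ i 1 * ℓ (i+1) 1 + ℓ i 2 * ℓ (i+1) 2 = 0 :=
    fun i => by simpa [Fin.sum_univ_three] using horth i
  have h01 : ℓ 0 0*ℓ 1 0 + ℓ 0 1*ℓ 1 1 + ℓ 0 2*ℓ 1 2 = 0 := hO 0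
  have h12 : ℓ 1 0*ℓ 2 0 + ℓ 1 1*ℓ 2 1 + ℓ 1 2*ℓ 2 2 = 0 := hO 1
  have h23 : ℓ 2 0*ℓ 3 0 + ℓ 2 1*ℓ 3 1 + ℓ 2 2*ℓ 3 2 = 0 := hO 2
  have h34 : ℓ 3 0*ℓ 4 0 + ℓ 3 1*ℓ 4 1 + ℓ 3 2*ℓ 4 2 = 0 := hO 3
  have h40 : ℓ 4 0*ℓ 0 0 + ℓ 4 1*ℓ 0 1 + ℓ 4 2*ℓ 0 2 = 0 := hO 4
  obtain ⟨x, hx1, hx2, hx0⟩ := exists_common (ℓ 0) (ℓ 1) (ℓ 2) (ℓ 3)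
    (hU 0) (hU 1) h01 (hU 2) (hU 3) h23 h12
  have hxne : ¬ (∀ jj, x jj = 0) := by
    intro h
    obtain ⟨cc, hcc⟩ := hx0 h
    exact hnpar 2 0 (by decide) cc (funext fun jj => by simpa using hcc jj)
  have htne : x 0*ℓ 4 0 + x 1*ℓ 4 1 + x 2*ℓ 4 2 ≠ 0 := by
    intro htz
    have htb : (x 0*ℓ 1 0 + x 1*ℓ 1 1 + x 2*ℓ 1 2)
        * (ℓ 4 0*ℓ 1 0 + ℓ 4 1*ℓ 1 1 + ℓ 4 2*ℓ 1 2) = 0 := by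
      linear_combination htz - ℓ 4 0*hx1 0 - ℓ 4 1*hx1 1 - ℓ 4 2*hx1 2
        - (x 0*ℓ 0 0 + x 1*ℓ 0 1 + x 2*ℓ 0 2)*h40
    have htc : (x 0*ℓ 2 0 + x 1*ℓ 2 1 + x 2*ℓ 2 2)
        * (ℓ 4 0*ℓ 2 0 + ℓ 4 1*ℓ 2 1 + ℓ 4 2*ℓ 2 2) = 0 := by
      linear_combination htz - ℓ 4 0*hx2 0 - ℓ 4 1*hx2 1 - ℓ 4 2*hx2 2
        - (x 0*ℓ 3 0 + x 1*ℓ 3 1 + x 2*ℓ 3 2)*h34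
    by_cases he14 : ℓ 4 0*ℓ 1 0 + ℓ 4 1*ℓ 1 1 + ℓ 4 2*ℓ 1 2 = 0
    · have h3n := perp_plane (ℓ 0) (ℓ 1) (ℓ 3) (ℓ 4) (hU 0) (hU 1) h01 h40 he14 (hU 4)
        (by linear_combination h34)
      have hl3 := fun jj => expand_in_plane (ℓ 0) (ℓ 1) (ℓ 3) (hU 0) (hU 1) h01 h3n jj
      have hkey : (ℓ 3 0*ℓ 0 0 + ℓ 3 1*ℓ 0 1 + ℓ 3 2*ℓ 0 2)
          * (ℓ 2 0*ℓ 0 0 + ℓ 2 1*ℓ 0 1 + ℓ 2 2*ℓ 0 2) = 0 := by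
        linear_combination h23 - ℓ 2 0*hl3 0 - ℓ 2 1*hl3 1 - ℓ 2 2*hl3 2
          - (ℓ 3 0*ℓ 1 0 + ℓ 3 1*ℓ 1 1 + ℓ 3 2*ℓ 1 2)*h12
      by_cases hα : ℓ 3 0*ℓ 0 0 + ℓ 3 1*ℓ 0 1 + ℓ 3 2*ℓ 0 2 = 0
      · exact hnpar 3 1 (by decide) (ℓ 3 0*ℓ 1 0 + ℓ 3 1*ℓ 1 1 + ℓ 3 2*ℓ 1 2)
          (funext fun jj => by
            have h := hl3 jj; rw [hα, zero_mul, zero_add] at h; simpa using h)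
      · have hg20 : ℓ 2 0*ℓ 0 0 + ℓ 2 1*ℓ 0 1 + ℓ 2 2*ℓ 0 2 = 0 :=
          (mul_eq_zero.mp hkey).resolve_left hα
        obtain ⟨cc, hcc⟩ := parallel_normals (ℓ 0) (ℓ 1) (ℓ 2) (ℓ 4) (hU 0) (hU 1) h01
          hg20 (by linear_combination h12) h40 he14 (hU 4)
        exact hnpar 2 4 (by decide) cc (funext fun jj => by simpa using hcc jj)
    · by_cases he24 : ℓ 4 0*ℓ 2 0 + ℓ 4 1*ℓ 2 1 + ℓ 4 2*ℓ 2 2 = 0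
      · have h43 : ℓ 4 0*ℓ 3 0 + ℓ 4 1*ℓ 3 1 + ℓ 4 2*ℓ 3 2 = 0 := by linear_combination h34
        have h0n := perp_plane (ℓ 2) (ℓ 3) (ℓ 0) (ℓ 4) (hU 2) (hU 3) h23 he24 h43 (hU 4)
          (by linear_combination h40)
        have hl0 := fun jj => expand_in_plane (ℓ 2) (ℓ 3) (ℓ 0) (hU 2) (hU 3) h23 h0n jj
        have hkey : (ℓ 0 0*ℓ 3 0 + ℓ 0 1*ℓ 3 1 + ℓ 0 2*ℓ 3 2)
            * (ℓ 1 0*ℓ 3 0 + ℓ 1 1*ℓ 3 1 + ℓ 1 2*ℓ 3 2) = 0 := by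
          linear_combination h01 - ℓ 1 0*hl0 0 - ℓ 1 1*hl0 1 - ℓ 1 2*hl0 2
            - (ℓ 0 0*ℓ 2 0 + ℓ 0 1*ℓ 2 1 + ℓ 0 2*ℓ 2 2)*h12
        by_cases hβ : ℓ 0 0*ℓ 3 0 + ℓ 0 1*ℓ 3 1 + ℓ 0 2*ℓ 3 2 = 0
        · exact hnpar 0 2 (by decide) (ℓ 0 0*ℓ 2 0 + ℓ 0 1*ℓ 2 1 + ℓ 0 2*ℓ 2 2)
            (funext fun jj => by
              have h := hl0 jj; rw [hβ, zero_mul, add_zero] at h; simpa using h)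
        · have h13 : ℓ 1 0*ℓ 3 0 + ℓ 1 1*ℓ 3 1 + ℓ 1 2*ℓ 3 2 = 0 :=
            (mul_eq_zero.mp hkey).resolve_left hβ
          obtain ⟨cc, hcc⟩ := parallel_normals (ℓ 2) (ℓ 3) (ℓ 1) (ℓ 4) (hU 2) (hU 3) h23
            (by linear_combination h12) h13 he24 h43 (hU 4)
          exact hnpar 1 4 (by decide) cc (funext fun jj => by simpa using hcc jj)
      · have hb : x 0*ℓ 1 0 + x 1*ℓ 1 1 + x 2*ℓ 1 2 = 0 :=
          (mul_eq_zero.mp htb).resolve_right he14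
        have hc : x 0*ℓ 2 0 + x 1*ℓ 2 1 + x 2*ℓ 2 2 = 0 :=
          (mul_eq_zero.mp htc).resolve_right he24
        have ha : (x 0*ℓ 0 0 + x 1*ℓ 0 1 + x 2*ℓ 0 2) ≠ 0 := by
          intro h
          apply hxne
          intro jj
          have hh := hx1 jj; rw [h, hb, zero_mul, zero_mul, add_zero] at hh; exact hh
        apply hnpar 0 3 (by decide)
          ((x 0*ℓ 3 0 + x 1*ℓ 3 1 + x 2*ℓ 3 2) / (x 0*ℓ 0 0 + x 1*ℓ 0 1 + x 2*ℓ 0 2))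
        funext jj
        have hh1 := hx1 jj; rw [hb, zero_mul, add_zero] at hh1
        have hh2 := hx2 jj; rw [hc, zero_mul, zero_add] at hh2
        show ℓ 0 jj = _
        rw [Pi.smul_apply, smul_eq_mul]
        field_simp
        linear_combination hh2 - hh1
  have hAx : (∑ i, Matrix.of fun a b => ℓ i a * ℓ i b).mulVec x
      = fun jj => 2 * x jj + (x 0*ℓ 4 0 + x 1*ℓ 4 1 + x 2*ℓ 4 2) * ℓ 4 jj := by
    funext jj
    simp only [Matrix.mulVec, dotProduct, Matrix.sum_apply, Matrix.of_apply,
      Fin.sum_univ_three, Fin.sum_univ_five]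
    linear_combination (-1 : ℝ)*hx1 jj - hx2 jj
  have hgt : 2 * (dotProduct x x)
      < dotProduct x ((∑ i, Matrix.of fun a b => ℓ i a * ℓ i b).mulVec x) := by
    rw [hAx]
    simp only [dotProduct, Fin.sum_univ_three]
    nlinarith [mul_self_pos.mpr htne]
  have hA : (∑ i, Matrix.of fun a b => ℓ i a * ℓ i b).IsHermitian := by
    ext jj kk
    simp only [Matrix.conjTranspose_apply, Matrix.sum_apply, Matrix.of_apply, star_sum,
      star_trivial]
    exact Finset.sum_congr rfl fun i _ => mul_comm _ _
  have hex : ∃ i, 2 < hA.eigenvalues i := by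
    by_contra hcon
    push_neg at hcon
    exact absurd (quad_le_of_eigen _ hA hcon x) (not_le.mpr hgt)
  obtain ⟨i, hi⟩ := hex
  exact ⟨hA.eigenvalues i, hA.eigenvectorBasis i, hi,
    by simpa using hA.eigenvectorBasis.orthonormal.ne_zero i, hA.mulVec_eigenvectorBasis i⟩
end

section
/- Let $\ell_1, \dots, \ell_5$ be the regular pentagram in $\mathbb{R}^3$ (unit vectors with $\ell_i \perp \ell_{i+1}$ mod 5, arranged symmetrically around an axis) and let $\psi$ be the unit vector along the symmetry axis. Then $\sum_{i=1}^5 \langle \ell_i, \psi \rangle^2 = \frac{5 \cos(\pi/5)}{1 + \cos(\pi/5)}$, and this value exceeds $2$. -/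
open Real

lemma penta_cos45 : cos (4 * π / 5) = -cos (π / 5) := by
  have : (4 * π / 5 : ℝ) = π - π / 5 := by ring
  rw [this, Real.cos_pi_sub]

lemma penta_cos165 : cos (16 * π / 5) = -cos (π / 5) := by
  have : (16 * π / 5 : ℝ) = (2 * π - 4 * π / 5) + 2 * π := by ring
  rw [this, Real.cos_add_two_pi, Real.cos_two_pi_sub, penta_cos45]

lemma penta_pos : (0:ℝ) < 1 + cos (π / 5) := by
  rw [Real.cos_pi_div_five]
  have := Real.sqrt_nonneg 5
  nlinarith

lemma penta_key (α a b : ℝ) (hα : cos α ^ 2 = cos (π / 5) / (1 + cos (π / 5)))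
    (hab : cos (a - b) = -cos (π / 5)) :
    sin α * cos a * (sin α * cos b) + sin α * sin a * (sin α * sin b)
      + cos α * cos α = 0 := by
  have hs : sin α ^ 2 = 1 - cos α ^ 2 := Real.sin_sq α
  have hcs : cos a * cos b + sin a * sin b = cos (a - b) := (Real.cos_sub a b).symm
  have hpos : (0:ℝ) < 1 + cos (π / 5) := penta_pos
  have h1 : sin α * cos a * (sin α * cos b) + sin α * sin a * (sin α * sin b)
      + cos α * cos α = sin α ^ 2 * (cos a * cos b + sin a * sin b) + cos α ^ 2 := by ring
  rw [h1, hcs, hab, hs, hα]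
  field_simp
  ring

/-- The regular pentagram: five unit vectors at polar angle `α` with
`cos²α = cos(π/5)/(1+cos(π/5))`, at azimuthal angles `4πi/5`, so that
consecutive vectors are orthogonal.  For the unit vector `ψ` along the symmetry
axis the Bell quantity `∑ᵢ ⟨ℓᵢ, ψ⟩²` equals `5cos(π/5)/(1+cos(π/5)) ≈ 2.236`,
violating the classical bound 2. -/
theorem regular_pentagram_violation
    (α : ℝ) (hα : 0 ≤ α ∧ α ≤ π / 2 ∧ cos α ^ 2 = cos (π / 5) / (1 + cos (π / 5)))
    (ℓ : Fin 5 → Fin 3 → ℝ)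
    (hℓ : ∀ i : Fin 5, ℓ i = ![sin α * cos (4 * π * i / 5),
                               sin α * sin (4 * π * i / 5), cos α])
    (ψ : Fin 3 → ℝ) (hψ : ψ = ![0, 0, 1]) :
    (∀ i, ∑ j, ℓ i j ^ 2 = 1) ∧
    (∀ i : Fin 5, ∑ j, ℓ i j * ℓ (i + 1) j = 0) ∧
    (∑ i : Fin 5, (∑ j, ℓ i j * ψ j) ^ 2 = 5 * cos (π / 5) / (1 + cos (π / 5))) ∧
    2 < 5 * cos (π / 5) / (1 + cos (π / 5)) := by
  obtain ⟨hα0, hα1, hα2⟩ := hα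
  have hpos : (0:ℝ) < 1 + cos (π / 5) := penta_pos
  refine ⟨?_, ?_, ?_, ?_⟩
  · intro i
    simp only [hℓ, Fin.sum_univ_three, Matrix.cons_val_zero, Matrix.cons_val_one,
      Matrix.head_cons, Matrix.cons_val_two, Matrix.tail_cons]
    have hs := Real.sin_sq_add_cos_sq (4 * π * i / 5)
    have hs2 := Real.sin_sq_add_cos_sq α
    nlinarith [hs, hs2]
  · intro i
    have hs : sin α ^ 2 = 1 - cos α ^ 2 := Real.sin_sq α
    have hca : cos α ^ 2 * (1 + cos (π / 5)) = cos (π / 5) := by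
      rw [hα2]; field_simp
    fin_cases i
    · simp only [hℓ, Fin.sum_univ_three, Matrix.cons_val_zero, Matrix.cons_val_one,
        Matrix.head_cons, Matrix.cons_val_two, Matrix.tail_cons, Fin.isValue]
      norm_num
      linear_combination sin α ^ 2 * penta_cos45 - cos (π / 5) * hs + hca
    · simp only [hℓ, Fin.sum_univ_three, Matrix.cons_val_zero, Matrix.cons_val_one,
        Matrix.head_cons, Matrix.cons_val_two, Matrix.tail_cons, Fin.isValue]
      norm_num [show ((1 + 1 : Fin 5) : ℕ) = 2 from rfl]
      have hX : cos (4 * π / 5) * cos (4 * π * 2 / 5)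
          + sin (4 * π / 5) * sin (4 * π * 2 / 5) = -cos (π / 5) := by
        rw [← Real.cos_sub, show (4*π/5 - 4*π*2/5 : ℝ) = -(4*π/5) by ring,
          Real.cos_neg, penta_cos45]
      linear_combination sin α ^ 2 * hX - cos (π / 5) * hs + hca
    · simp only [hℓ, Fin.sum_univ_three, Matrix.cons_val_zero, Matrix.cons_val_one,
        Matrix.head_cons, Matrix.cons_val_two, Matrix.tail_cons, Fin.isValue]
      norm_num [show ((⟨2, by norm_num⟩ : Fin 5) + 1) = 3 from rfl, show (((3 : Fin 5)) : ℕ) = 3 from rfl]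
      have hX : cos (4 * π * 2 / 5) * cos (4 * π * 3 / 5)
          + sin (4 * π * 2 / 5) * sin (4 * π * 3 / 5) = -cos (π / 5) := by
        rw [← Real.cos_sub, show (4*π*2/5 - 4*π*3/5 : ℝ) = -(4*π/5) by ring,
          Real.cos_neg, penta_cos45]
      linear_combination sin α ^ 2 * hX - cos (π / 5) * hs + hca
    · simp only [hℓ, Fin.sum_univ_three, Matrix.cons_val_zero, Matrix.cons_val_one,
        Matrix.head_cons, Matrix.cons_val_two, Matrix.tail_cons, Fin.isValue]
      norm_num [show ((⟨3, by norm_num⟩ : Fin 5) + 1) = 4 from rfl, show (((4 : Fin 5)) : ℕ) = 4 from rfl]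
      have hX : cos (4 * π * 3 / 5) * cos (4 * π * 4 / 5)
          + sin (4 * π * 3 / 5) * sin (4 * π * 4 / 5) = -cos (π / 5) := by
        rw [← Real.cos_sub, show (4*π*3/5 - 4*π*4/5 : ℝ) = -(4*π/5) by ring,
          Real.cos_neg, penta_cos45]
      linear_combination sin α ^ 2 * hX - cos (π / 5) * hs + hca
    · simp only [hℓ, Fin.sum_univ_three, Matrix.cons_val_zero, Matrix.cons_val_one,
        Matrix.head_cons, Matrix.cons_val_two, Matrix.tail_cons, Fin.isValue]
      norm_num [show ((⟨4, by norm_num⟩ : Fin 5) + 1) = 0 from rfl]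
      have hX : cos (16 * π / 5) = -cos (π / 5) := penta_cos165
      have h16 : cos (4 * π * 4 / 5) = cos (16 * π / 5) := by norm_num; ring_nf
      linear_combination sin α ^ 2 * h16 + sin α ^ 2 * hX - cos (π / 5) * hs + hca
  · simp only [hℓ, hψ, Fin.sum_univ_three, Fin.sum_univ_five, Matrix.cons_val_zero,
      Matrix.cons_val_one, Matrix.head_cons, Matrix.cons_val_two, Matrix.tail_cons,
      Fin.isValue]
    linear_combination (5:ℝ) * hα2
  · rw [lt_div_iff₀ hpos, Real.cos_pi_div_five]
    nlinarith [Real.sq_sqrt (by norm_num : (5:ℝ) ≥ 0), Real.sqrt_nonneg 5]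
end

section
/- Every unit vector $\psi \in \mathbb{C}^3$ can be transformed by a rotation $g \in SO(3)$ (acting on $\mathbb{C}^3 = \mathbb{R}^3 \otimes \mathbb{C}$) and a phase factor into the canonical form $\psi = m \cos\varphi + i\, n \sin\varphi$, where $m, n \in \mathbb{R}^3$ are orthonormal vectors and $0 \leq \varphi \leq \pi/4$. -/
open Real

lemma exists_unit_orthogonal (m : EuclideanSpace ℝ (Fin 3)) :
    ∃ n : Fin 3 → ℝ, (∑ j, n j ^ 2 = 1) ∧ (∑ j, m j * n j = 0) := by
  have hK : (ℝ ∙ m)ᗮ ≠ ⊥ := by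
    intro h
    have h2 := Submodule.finrank_add_finrank_orthogonal (𝕜 := ℝ) (ℝ ∙ m)
    rw [h, finrank_bot, add_zero] at h2
    have hle : Module.finrank ℝ ↥(ℝ ∙ m) ≤ 1 := by
      rcases eq_or_ne m 0 with hm | hm
      · rw [hm, Submodule.span_zero_singleton]; simp
      · rw [finrank_span_singleton hm]
    rw [h2] at hle
    have : Module.finrank ℝ (EuclideanSpace ℝ (Fin 3)) = 3 := by simp
    omega
  obtain ⟨v, hv, hv0⟩ := Submodule.exists_mem_ne_zero_of_ne_bot hK
  have hvn : ‖v‖ ≠ 0 := norm_ne_zero_iff.mpr hv0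
  refine ⟨(‖v‖⁻¹ : ℝ) • v, ?_, ?_⟩
  · have h1 : ‖(‖v‖⁻¹ : ℝ) • v‖ = 1 := by
      rw [norm_smul]; simp [abs_of_nonneg (norm_nonneg v), hvn]
    have := real_inner_self_eq_norm_sq ((‖v‖⁻¹ : ℝ) • v)
    rw [h1, one_pow] at this
    rw [PiLp.inner_apply] at this
    simp only [RCLike.inner_apply, starRingEnd_apply, star_trivial] at this
    calc ∑ j, ((‖v‖⁻¹ : ℝ) • v) j ^ 2 = ∑ j, ((‖v‖⁻¹ : ℝ) • v) j * ((‖v‖⁻¹ : ℝ) • v) j := by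
          simp [pow_two]
      _ = 1 := this.symm ▸ rfl
  · have horth : inner ℝ m ((‖v‖⁻¹ : ℝ) • v) = (0:ℝ) := by
      have hmv : inner ℝ m v = (0:ℝ) := by
        have := (Submodule.mem_orthogonal _ v).mp hv m (Submodule.mem_span_singleton_self m)
        exact (real_inner_comm v m) ▸ this
      rw [inner_smul_right, hmv, mul_zero]
    rw [PiLp.inner_apply] at horth
    simpa [mul_comm, mul_left_comm, mul_assoc] using horth

/-- Every unit spin-1 state `ψ ∈ ℂ³` can be brought by a rotation `g ∈ SO(3)`
and a phase factor to the canonical form `m cos φ + i n sin φ` with `m, n`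
orthonormal real vectors and `0 ≤ φ ≤ π/4`. -/
theorem spin_one_canonical_form (ψ : Fin 3 → ℂ) (hψ : ∑ j, ‖ψ j‖ ^ 2 = 1) :
    ∃ (g : Matrix (Fin 3) (Fin 3) ℝ) (θ φ : ℝ) (m n : Fin 3 → ℝ),
      g ∈ Matrix.orthogonalGroup (Fin 3) ℝ ∧ g.det = 1 ∧
      (∑ j, m j ^ 2 = 1) ∧ (∑ j, n j ^ 2 = 1) ∧ (∑ j, m j * n j = 0) ∧
      0 ≤ φ ∧ φ ≤ π / 4 ∧
      (∀ j, Complex.exp (Complex.I * θ) * (∑ k, (g j k : ℂ) * ψ k)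
        = (m j : ℂ) * Real.cos φ + Complex.I * (n j : ℂ) * Real.sin φ) := by
  classical
  set S : ℂ := ∑ j, (ψ j)^2 with hSdef
  set θ : ℝ := -(S.arg) / 2 with hθdef
  set χ : Fin 3 → ℂ := fun j => Complex.exp (Complex.I * θ) * ψ j with hχdef
  set x : Fin 3 → ℝ := fun j => (χ j).re with hxdef
  set y : Fin 3 → ℝ := fun j => (χ j).im with hydef
  -- sum of squares of χ is real and nonnegative
  have hexp2 : Complex.exp (Complex.I * θ) ^ 2 = Complex.exp (-(S.arg : ℂ) * Complex.I) := by
    rw [← Complex.exp_nat_mul]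
    congr 1
    rw [hθdef]; push_cast; ring
  have hsum2 : ∑ j, χ j ^ 2 = (‖S‖ : ℂ) := by
    have h1 : ∑ j, χ j ^ 2 = Complex.exp (Complex.I * θ) ^ 2 * S := by
      rw [hSdef, Finset.mul_sum]
      exact Finset.sum_congr rfl fun j _ => by rw [hχdef]; ring
    rw [h1, hexp2]
    nth_rewrite 2 [← Complex.norm_mul_exp_arg_mul_I S]
    have : Complex.exp (-(S.arg : ℂ) * Complex.I) *
        ((‖S‖ : ℂ) * Complex.exp ((S.arg : ℂ) * Complex.I))
        = (‖S‖ : ℂ) *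
          (Complex.exp (-(S.arg : ℂ) * Complex.I) * Complex.exp ((S.arg : ℂ) * Complex.I)) := by
      ring
    rw [this, ← Complex.exp_add]
    norm_num
  have habs : ∀ j, ‖χ j‖ = ‖ψ j‖ := by
    intro j
    rw [hχdef]
    simp [map_mul, Complex.norm_exp]
  have hAB : (∑ j, x j ^ 2) + (∑ j, y j ^ 2) = 1 := by
    rw [← hψ, ← Finset.sum_add_distrib]
    refine Finset.sum_congr rfl fun j _ => ?_
    rw [← habs j, Complex.sq_norm, Complex.normSq_apply, hxdef, hydef]
    ring
  have hre : (∑ j, x j ^ 2) - (∑ j, y j ^ 2) = ‖S‖ := by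
    have h1 : (∑ j, χ j ^ 2).re = ‖S‖ := by rw [hsum2]; simp
    rw [← h1, Complex.re_sum, ← Finset.sum_sub_distrib]
    refine Finset.sum_congr rfl fun j _ => ?_
    rw [hxdef, hydef]
    simp [pow_two, Complex.mul_re]
  have him : (∑ j, x j * y j) = 0 := by
    have h1 : (∑ j, χ j ^ 2).im = 0 := by rw [hsum2]; simp
    rw [Complex.im_sum] at h1
    have h2 : ∑ j, (χ j ^ 2).im = ∑ j, 2 * (x j * y j) := by
      refine Finset.sum_congr rfl fun j _ => ?_
      rw [hxdef, hydef]
      simp [pow_two, Complex.mul_im]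
      ring
    rw [h2, ← Finset.mul_sum] at h1
    linarith
  set B : ℝ := ∑ j, y j ^ 2 with hBdef
  have hB0 : 0 ≤ B := Finset.sum_nonneg fun j _ => sq_nonneg _
  have habsS : 0 ≤ ‖S‖ := norm_nonneg S
  have hBhalf : B ≤ 1 / 2 := by
    have hA : ∑ j, x j ^ 2 = 1 - B := by linarith
    rw [hA] at hre
    linarith
  set b : ℝ := Real.sqrt B with hbdef
  have hb0 : 0 ≤ b := Real.sqrt_nonneg _
  have hb2 : b ^ 2 = B := Real.sq_sqrt hB0
  have hb1 : b ≤ 1 := by nlinarith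
  set φ : ℝ := Real.arcsin b with hφdef
  have hφ0 : 0 ≤ φ := Real.arcsin_nonneg.mpr hb0
  have hsinφ : Real.sin φ = b := Real.sin_arcsin (by linarith) hb1
  have hA : ∑ j, x j ^ 2 = 1 - B := by linarith
  set a : ℝ := Real.sqrt (1 - B) with hadef
  have ha2 : a ^ 2 = 1 - B := Real.sq_sqrt (by linarith)
  have hapos : 0 < a := Real.sqrt_pos.mpr (by linarith)
  have hane : a ≠ 0 := ne_of_gt hapos
  have hcosφ : Real.cos φ = a := by
    rw [hφdef, Real.cos_arcsin, hb2, hadef]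
  have hφle : φ ≤ π / 4 := by
    rw [hφdef]
    have hx : b ∈ Set.Icc (-1 : ℝ) 1 := ⟨by linarith, hb1⟩
    have hy : π / 4 ∈ Set.Icc (-(π / 2)) (π / 2) := by
      constructor <;> nlinarith [Real.pi_pos]
    rw [Real.arcsin_le_iff_le_sin hx hy, Real.sin_pi_div_four]
    nlinarith [Real.sq_sqrt (by norm_num : (0:ℝ) ≤ 2), Real.sqrt_nonneg 2]
  set m : Fin 3 → ℝ := fun j => x j / a with hmdef
  have hmsum : ∑ j, m j ^ 2 = 1 := by
    have : ∑ j, m j ^ 2 = (∑ j, x j ^ 2) / a ^ 2 := by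
      rw [Finset.sum_div]
      exact Finset.sum_congr rfl fun j _ => by rw [hmdef, div_pow]
    rw [this, hA, ha2]
    exact div_self (ne_of_gt (by linarith))
  -- key pointwise identity for m
  have hmx : ∀ j, m j * Real.cos φ = x j := by
    intro j
    rw [hmdef, hcosφ]
    field_simp
  -- choose n depending on whether B = 0
  by_cases hBzero : B = 0
  · -- y = 0; pick any unit vector orthogonal to m
    obtain ⟨n, hn1, hn2⟩ := exists_unit_orthogonal (WithLp.toLp 2 m)
    have hy0 : ∀ j, y j = 0 := by
      intro j
      have := (Finset.sum_eq_zero_iff_of_nonneg (fun j _ => sq_nonneg (y j))).mp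
        (hBdef ▸ hBzero) j (Finset.mem_univ j)
      exact pow_eq_zero_iff (n := 2) (by norm_num) |>.mp this
    have hbz : b = 0 := by rw [hbdef, hBzero, Real.sqrt_zero]
    refine ⟨1, θ, φ, m, n, one_mem _, Matrix.det_one, hmsum, hn1, hn2, hφ0, hφle, ?_⟩
    intro j
    have hg : ∑ k, ((1 : Matrix (Fin 3) (Fin 3) ℝ) j k : ℂ) * ψ k = ψ j := by
      rw [Finset.sum_eq_single j]
      · simp [Matrix.one_apply_eq]
      · intro k _ hk
        simp [Matrix.one_apply_ne (Ne.symm hk)]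
      · simp
    rw [hg]
    have h2 : n j * Real.sin φ = y j := by rw [hsinφ, hbz, hy0 j, mul_zero]
    calc Complex.exp (Complex.I * θ) * ψ j = χ j := rfl
      _ = (x j : ℂ) + (y j : ℂ) * Complex.I := (Complex.re_add_im (χ j)).symm
      _ = (m j : ℂ) * Real.cos φ + Complex.I * (n j : ℂ) * Real.sin φ := by
          rw [← hmx j, ← h2]; push_cast; ring
  · -- B > 0; take n = y / b
    have hbpos : 0 < b := Real.sqrt_pos.mpr (lt_of_le_of_ne hB0 (Ne.symm hBzero))
    have hbne : b ≠ 0 := ne_of_gt hbpos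
    set n : Fin 3 → ℝ := fun j => y j / b with hndef
    have hnsum : ∑ j, n j ^ 2 = 1 := by
      have : ∑ j, n j ^ 2 = (∑ j, y j ^ 2) / b ^ 2 := by
        rw [Finset.sum_div]
        exact Finset.sum_congr rfl fun j _ => by rw [hndef, div_pow]
      rw [this, ← hBdef, hb2]
      field_simp
    have hmn : ∑ j, m j * n j = 0 := by
      have : ∑ j, m j * n j = (∑ j, x j * y j) / (a * b) := by
        rw [Finset.sum_div]
        refine Finset.sum_congr rfl fun j _ => ?_
        rw [hmdef, hndef]
        field_simp
      rw [this, him, zero_div]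
    refine ⟨1, θ, φ, m, n, one_mem _, Matrix.det_one, hmsum, hnsum, hmn, hφ0, hφle, ?_⟩
    intro j
    have hg : ∑ k, ((1 : Matrix (Fin 3) (Fin 3) ℝ) j k : ℂ) * ψ k = ψ j := by
      rw [Finset.sum_eq_single j]
      · simp [Matrix.one_apply_eq]
      · intro k _ hk
        simp [Matrix.one_apply_ne (Ne.symm hk)]
      · simp
    rw [hg]
    have h2 : n j * Real.sin φ = y j := by
      rw [hsinφ, hndef]
      field_simp
    calc Complex.exp (Complex.I * θ) * ψ j = χ j := rfl
      _ = (x j : ℂ) + (y j : ℂ) * Complex.I := (Complex.re_add_im (χ j)).symm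
      _ = (m j : ℂ) * Real.cos φ + Complex.I * (n j : ℂ) * Real.sin φ := by
          rw [← hmx j, ← h2]; push_cast; ring
end
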